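/- Let T : 𝕋² → 𝕋² be an invertible Lebesgue-measure-preserving map and λ ∈ (0,1). Fix N and suppose m(T^{−n}(R) ∩ Q) ≥ λ m(R)m(Q) for all dyadic squares R, Q of side 2^{−N}. Let f = Σ_i c_i χ_{R_i} be a mean-zero simple function constant on the squares R_i of side 2^{−N}. Then for every square R_k of side 2^{−N}: |(1/m(R_k)) ∫_{R_k} f∘Tⁿ dm| ≤ (1−λ) ‖f‖_{L^∞}. -/

import Mathlib

open MeasureTheory

/-- The two-dimensional torus `𝕋² = ℝ²/ℤ²`. -/
abbrev Torus : Type := AddCircle (1:ℝ) × AddCircle (1:ℝ)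

/-- The dyadic square of side `2^{-N}` with lower-left corner `(j/2^N, k/2^N)`. -/
def dyadicSquare (N : ℕ) (j k : Fin (2 ^ N)) : Set Torus :=
  {p | ∃ x y : ℝ, p = ((x : AddCircle (1:ℝ)), (y : AddCircle (1:ℝ))) ∧
    x ∈ Set.Ico ((j : ℝ) / 2 ^ N) (((j : ℝ) + 1) / 2 ^ N) ∧
    y ∈ Set.Ico ((k : ℝ) / 2 ^ N) (((k : ℝ) + 1) / 2 ^ N)}

namespace Stmt15Aux

open Set

lemma coe_eq_coe_iff (x y : ℝ) :
    (x : AddCircle (1:ℝ)) = (y : AddCircle (1:ℝ)) ↔ ∃ m : ℤ, y = x + m := by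
  rw [show ((x : AddCircle (1:ℝ)) = (y : AddCircle (1:ℝ))) ↔ -x + y ∈ AddSubgroup.zmultiples (1:ℝ) from QuotientAddGroup.eq]
  constructor
  · rintro h
    obtain ⟨m, hm⟩ := AddSubgroup.mem_zmultiples_iff.1 h
    rw [zsmul_eq_mul, mul_one] at hm
    exact ⟨m, by linarith⟩
  · rintro ⟨m, rfl⟩
    exact AddSubgroup.mem_zmultiples_iff.2 ⟨m, by rw [zsmul_eq_mul, mul_one]; ring⟩

/-- arc: image of `Ico a b` in the circle. -/
def arc (a b : ℝ) : Set (AddCircle (1:ℝ)) :=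
  (fun x : ℝ => (x : AddCircle (1:ℝ))) '' Set.Ico a b

lemma measurableSet_arc (a b : ℝ) : MeasurableSet (arc a b) := by
  rcases le_or_gt b a with h | h
  · simp [arc, Set.Ico_eq_empty_of_le h]
  · have : arc a b = ((fun x : ℝ => (x : AddCircle (1:ℝ))) '' Set.Ioo a b) ∪ {((a : ℝ) : AddCircle (1:ℝ))} := by
      rw [arc, ← Set.Ioo_union_left h, Set.image_union]
      simp [Set.union_comm]
    rw [this]
    refine MeasurableSet.union ?_ (measurableSet_singleton _)
    exact (QuotientAddGroup.isOpenMap_coe _ isOpen_Ioo).measurableSet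

lemma volume_arc {a b : ℝ} (h0 : 0 ≤ a) (hab : a < b) (hb1 : b ≤ 1) :
    volume (arc a b) = ENNReal.ofReal (b - a) := by
  rcases lt_or_ge b (a + 1) with hba | hba
  · set t : ℝ := (a + b - 1) / 2 with ht
    have key : (fun x : ℝ => (x : AddCircle (1:ℝ))) ⁻¹' arc a b ∩ Ioc t (t + 1) = Ico a b := by
      ext x
      constructor
      · rintro ⟨hx, hxI⟩
        obtain ⟨x', hx', hxx'⟩ := hx
        obtain ⟨m, hm⟩ := (coe_eq_coe_iff x' x).1 hxx'
        have hm1 : (m : ℝ) < 1 := by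
          have := hxI.2
          have := hx'.1
          linarith [hm]
        have hm2 : (-1 : ℝ) < m := by
          have := hxI.1
          have := hx'.2
          linarith [hm]
        have : m = 0 := by
          have h1 : m < 1 := by exact_mod_cast hm1
          have h2 : (-1 : ℤ) < m := by exact_mod_cast hm2
          omega
        subst this
        simp only [Int.cast_zero, add_zero] at hm
        subst hm
        exact hx'
      · intro hx
        refine ⟨⟨x, hx, rfl⟩, ⟨?_, ?_⟩⟩
        · have := hx.1; rw [ht]; linarith
        · have := hx.2; rw [ht]; linarith
    have := AddCircle.add_projection_respects_measure (T := (1:ℝ)) t (measurableSet_arc a b)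
    rw [this, key, Real.volume_Ico]
  · have ha0 : a = 0 := by linarith
    have hb1' : b = 1 := by linarith
    subst ha0; subst hb1'
    have : arc 0 1 = Set.univ := by
      ext z
      simp only [Set.mem_univ, iff_true]
      obtain ⟨x, hx, hxz⟩ := AddCircle.eq_coe_Ico z
      exact ⟨x, hx, hxz⟩
    rw [this]
    rw [show ENNReal.ofReal ((1:ℝ) - 0) = 1 by norm_num]
    exact UnitAddCircle.measure_univ


lemma Ico_subset_unit (N : ℕ) (j : Fin (2^N)) :
    Set.Ico ((j : ℝ) / 2 ^ N) (((j : ℝ) + 1) / 2 ^ N) ⊆ Set.Ico (0:ℝ) 1 := by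
  have h2 : (0:ℝ) < 2 ^ N := by positivity
  have hj : ((j:ℕ) : ℝ) + 1 ≤ 2 ^ N := by
    have := j.isLt
    have : ((j:ℕ) : ℝ) + 1 ≤ ((2^N : ℕ) : ℝ) := by exact_mod_cast this
    simpa using this
  rintro x ⟨h1, h2'⟩
  constructor
  · have : (0:ℝ) ≤ (j:ℝ) / 2 ^ N := by positivity
    linarith
  · have : ((j : ℝ) + 1) / 2 ^ N ≤ 1 := by
      rw [div_le_one h2]; exact hj
    linarith

lemma eq_of_coe_eq (N : ℕ) (j j' : Fin (2^N)) {x x' : ℝ}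
    (hx : x ∈ Set.Ico ((j : ℝ) / 2 ^ N) (((j : ℝ) + 1) / 2 ^ N))
    (hx' : x' ∈ Set.Ico ((j' : ℝ) / 2 ^ N) (((j' : ℝ) + 1) / 2 ^ N))
    (h : (x : AddCircle (1:ℝ)) = (x' : AddCircle (1:ℝ))) : j = j' ∧ x = x' := by
  have hu := Ico_subset_unit N j hx
  have hu' := Ico_subset_unit N j' hx'
  obtain ⟨m, hm⟩ := (coe_eq_coe_iff x x').1 h
  have hm1 : (m : ℝ) < 1 := by have := hu.1; have := hu'.2; linarith
  have hm2 : (-1:ℝ) < m := by have := hu.2; have := hu'.1; linarith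
  have hm0 : m = 0 := by
    have h1 : m < 1 := by exact_mod_cast hm1
    have h2 : (-1:ℤ) < m := by exact_mod_cast hm2
    omega
  subst hm0
  simp only [Int.cast_zero, add_zero] at hm
  subst hm
  have h2 : (0:ℝ) < 2 ^ N := by positivity
  have hjj' : ((j:ℕ) : ℝ) < ((j':ℕ) : ℝ) + 1 := by
    have a1 := hx.1; have a2 := hx'.2
    rw [div_le_iff₀ h2] at a1
    rw [lt_div_iff₀ h2] at a2
    nlinarith
  have hj'j : ((j':ℕ) : ℝ) < ((j:ℕ) : ℝ) + 1 := by
    have a1 := hx'.1; have a2 := hx.2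
    rw [div_le_iff₀ h2] at a1
    rw [lt_div_iff₀ h2] at a2
    nlinarith
  have e1 : (j:ℕ) < (j':ℕ) + 1 := by exact_mod_cast hjj'
  have e2 : (j':ℕ) < (j:ℕ) + 1 := by exact_mod_cast hj'j
  exact ⟨Fin.ext (by omega), rfl⟩

lemma exists_fin (N : ℕ) {x : ℝ} (hx : x ∈ Set.Ico (0:ℝ) 1) :
    ∃ j : Fin (2^N), x ∈ Set.Ico ((j : ℝ) / 2 ^ N) (((j : ℝ) + 1) / 2 ^ N) := by
  have h2 : (0:ℝ) < 2 ^ N := by positivity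
  set m := ⌊x * 2 ^ N⌋ with hmdef
  have hm0 : 0 ≤ m := Int.floor_nonneg.2 (by nlinarith [hx.1])
  have hmlt : m < (2^N : ℕ) := by
    rw [hmdef]
    apply Int.floor_lt.2
    push_cast
    nlinarith [hx.2]
  refine ⟨⟨m.toNat, by omega⟩, ?_, ?_⟩
  · show ((m.toNat : ℕ) : ℝ) / 2 ^ N ≤ x
    rw [div_le_iff₀ h2]
    have : ((m.toNat : ℕ) : ℝ) = (m : ℝ) := by
      exact_mod_cast congrArg (Int.cast : ℤ → ℝ) (Int.toNat_of_nonneg hm0)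
    rw [this]
    exact Int.floor_le _
  · show x < (((m.toNat : ℕ) : ℝ) + 1) / 2 ^ N
    rw [lt_div_iff₀ h2]
    have : ((m.toNat : ℕ) : ℝ) = (m : ℝ) := by
      exact_mod_cast congrArg (Int.cast : ℤ → ℝ) (Int.toNat_of_nonneg hm0)
    rw [this]
    have := Int.lt_floor_add_one (x * 2 ^ N)
    linarith


lemma dyadicSquare_eq (N : ℕ) (j k : Fin (2^N)) :
    dyadicSquare N j k =
      arc ((j:ℝ)/2^N) (((j:ℝ)+1)/2^N) ×ˢ arc ((k:ℝ)/2^N) (((k:ℝ)+1)/2^N) := by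
  ext p
  constructor
  · rintro ⟨x, y, hp, hx, hy⟩
    rw [hp]
    exact ⟨⟨x, hx, rfl⟩, ⟨y, hy, rfl⟩⟩
  · rintro ⟨⟨x, hx, hx1⟩, ⟨y, hy, hy1⟩⟩
    exact ⟨x, y, Prod.ext hx1.symm hy1.symm, hx, hy⟩

lemma measurableSet_square (N : ℕ) (j k : Fin (2^N)) :
    MeasurableSet (dyadicSquare N j k) := by
  rw [dyadicSquare_eq]
  exact (measurableSet_arc _ _).prod (measurableSet_arc _ _)

lemma arc_bounds (N : ℕ) (j : Fin (2^N)) :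
    0 ≤ (j:ℝ)/2^N ∧ (j:ℝ)/2^N < ((j:ℝ)+1)/2^N ∧ ((j:ℝ)+1)/2^N ≤ 1 := by
  have h2 : (0:ℝ) < 2 ^ N := by positivity
  refine ⟨by positivity, ?_, ?_⟩
  · rw [div_lt_div_iff₀ h2 h2]; nlinarith
  · rw [div_le_one h2]
    have := j.isLt
    have : ((j:ℕ) : ℝ) + 1 ≤ ((2^N : ℕ) : ℝ) := by exact_mod_cast this
    simpa using this

lemma volume_square (N : ℕ) (j k : Fin (2^N)) :
    volume (dyadicSquare N j k) =
      ENNReal.ofReal (((2:ℝ)^N)⁻¹) * ENNReal.ofReal (((2:ℝ)^N)⁻¹) := by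
  obtain ⟨ha, hab, hb⟩ := arc_bounds N j
  obtain ⟨ha', hab', hb'⟩ := arc_bounds N k
  rw [dyadicSquare_eq, Measure.volume_eq_prod, Measure.prod_prod,
    volume_arc ha hab hb, volume_arc ha' hab' hb']
  rw [show ((j:ℝ)+1)/2^N - (j:ℝ)/2^N = ((2:ℝ)^N)⁻¹ by field_simp; ring,
    show ((k:ℝ)+1)/2^N - (k:ℝ)/2^N = ((2:ℝ)^N)⁻¹ by field_simp; ring]

lemma toReal_volume_square (N : ℕ) (j k : Fin (2^N)) :
    (volume (dyadicSquare N j k)).toReal = ((2:ℝ)^N)⁻¹ * ((2:ℝ)^N)⁻¹ := by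
  have h2 : (0:ℝ) ≤ ((2:ℝ)^N)⁻¹ := by positivity
  rw [volume_square, ENNReal.toReal_mul, ENNReal.toReal_ofReal h2]

lemma volume_square_ne_top (N : ℕ) (j k : Fin (2^N)) :
    volume (dyadicSquare N j k) ≠ ⊤ := by
  rw [volume_square]
  exact ENNReal.mul_ne_top ENNReal.ofReal_ne_top ENNReal.ofReal_ne_top

lemma corner_mem (N : ℕ) (j k : Fin (2^N)) :
    ((((j:ℝ)/2^N : ℝ) : AddCircle (1:ℝ)), (((k:ℝ)/2^N : ℝ) : AddCircle (1:ℝ)))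
      ∈ dyadicSquare N j k := by
  obtain ⟨ha, hab, hb⟩ := arc_bounds N j
  obtain ⟨ha', hab', hb'⟩ := arc_bounds N k
  exact ⟨_, _, rfl, ⟨le_refl _, hab⟩, ⟨le_refl _, hab'⟩⟩

lemma square_disjoint (N : ℕ) {j k j' k' : Fin (2^N)} (h : ¬(j = j' ∧ k = k')) :
    Disjoint (dyadicSquare N j k) (dyadicSquare N j' k') := by
  rw [Set.disjoint_left]
  rintro p ⟨x, y, hp, hx, hy⟩ ⟨x', y', hp', hx', hy'⟩
  rw [hp] at hp'
  have h1 : (x : AddCircle (1:ℝ)) = (x' : AddCircle (1:ℝ)) := congrArg Prod.fst hp'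
  have h2 : (y : AddCircle (1:ℝ)) = (y' : AddCircle (1:ℝ)) := congrArg Prod.snd hp'
  exact h ⟨(eq_of_coe_eq N j j' hx hx' h1).1, (eq_of_coe_eq N k k' hy hy' h2).1⟩

lemma square_cover (N : ℕ) (p : Torus) : ∃ j k, p ∈ dyadicSquare N j k := by
  obtain ⟨x, hx, hx1⟩ := AddCircle.eq_coe_Ico p.1
  obtain ⟨y, hy, hy1⟩ := AddCircle.eq_coe_Ico p.2
  obtain ⟨j, hj⟩ := exists_fin N hx
  obtain ⟨k, hk⟩ := exists_fin N hy
  exact ⟨j, k, x, y, Prod.ext hx1.symm hy1.symm, hj, hk⟩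

end Stmt15Aux

open Stmt15Aux

/-- if `T` preserves Lebesgue measure, is invertible, and
satisfies `m(T^{−n}(R) ∩ Q) ≥ λ m(R) m(Q)` for all dyadic squares `R, Q` of
side `2^{-N}`, then for any mean-zero simple function `f` constant on the
dyadic squares of side `2^{-N}`, the average of `f ∘ Tⁿ` over any such square
is at most `(1−λ)‖f‖_{L^∞}` in absolute value. -/
theorem stmt15 (T : Torus → Torus)
    (hT : MeasurePreserving T (volume : Measure Torus) volume)
    (hbij : Function.Bijective T)
    (N n : ℕ) (lam : ℝ) (hlam : lam ∈ Set.Ioo (0:ℝ) 1)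
    (hmix : ∀ j k j' k' : Fin (2 ^ N),
      lam * (volume (dyadicSquare N j k)).toReal *
        (volume (dyadicSquare N j' k')).toReal ≤
      (volume ((T^[n]) ⁻¹' (dyadicSquare N j k) ∩ dyadicSquare N j' k')).toReal)
    (c : Fin (2 ^ N) → Fin (2 ^ N) → ℝ)
    (f : Torus → ℝ)
    (hf : f = fun z => ∑ j, ∑ k, c j k * Set.indicator (dyadicSquare N j k) 1 z)
    (hmean : ∫ z, f z = 0) :
    ∀ j k : Fin (2 ^ N),
      |(volume (dyadicSquare N j k)).toReal⁻¹ *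
        ∫ z in dyadicSquare N j k, f (T^[n] z)| ≤
      (1 - lam) * ⨆ z : Torus, |f z| := by
  obtain ⟨hl0, hl1⟩ := hlam
  intro j' k'
  set s : ℝ := ((2:ℝ)^N)⁻¹ with hs
  have hspos : 0 < s := by positivity
  set v : ℝ := s * s with hvdef
  have hvpos : 0 < v := by positivity
  have htv : ∀ j k : Fin (2^N), (volume (dyadicSquare N j k)).toReal = v :=
    fun j k => toReal_volume_square N j k
  have hTm : Measurable (T^[n]) := hT.measurable.iterate n
  have hSmeas : ∀ j k : Fin (2^N), MeasurableSet ((T^[n]) ⁻¹' dyadicSquare N j k) :=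
    fun j k => hTm (measurableSet_square N j k)
  -- rewrite f as sum of constant indicators
  have hf' : ∀ z, f z = ∑ j, ∑ k, Set.indicator (dyadicSquare N j k) (fun _ => c j k) z := by
    intro z
    rw [hf]
    refine Finset.sum_congr rfl fun j _ => Finset.sum_congr rfl fun k _ => ?_
    by_cases hz : z ∈ dyadicSquare N j k <;>
      simp [Set.indicator_of_mem, Set.indicator_of_notMem, hz]
  -- integrability of indicator terms
  have hIntFull : ∀ j k : Fin (2^N),
      Integrable (Set.indicator (dyadicSquare N j k) (fun _ => c j k)) (volume : Measure Torus) := by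
    intro j k
    rw [integrable_indicator_iff (measurableSet_square N j k)]
    exact integrableOn_const (volume_square_ne_top N j k)
  -- mean-zero gives sum of coefficients zero
  have hsum_c : (∑ j, ∑ k, c j k) = 0 := by
    have h1 : ∫ z, f z = ∑ j, ∑ k, v * c j k := by
      rw [show (fun z => f z) = fun z => ∑ j, ∑ k, Set.indicator (dyadicSquare N j k) (fun _ => c j k) z from funext hf']
      rw [integral_finset_sum _ (fun j _ => integrable_finset_sum _ (fun k _ => hIntFull j k))]
      refine Finset.sum_congr rfl fun j _ => ?_
      rw [integral_finset_sum _ (fun k _ => hIntFull j k)]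
      refine Finset.sum_congr rfl fun k _ => ?_
      rw [integral_indicator_const _ (measurableSet_square N j k), measureReal_def, htv j k, smul_eq_mul]
    rw [hmean] at h1
    have h2 : (0:ℝ) = v * ∑ j, ∑ k, c j k := by
      rw [h1, Finset.mul_sum]
      exact Finset.sum_congr rfl fun j _ => by rw [Finset.mul_sum]
    exact (mul_eq_zero.1 h2.symm).resolve_left (ne_of_gt hvpos)
  -- the masses a j k
  set R' : Set Torus := dyadicSquare N j' k' with hR'
  set a : Fin (2^N) → Fin (2^N) → ℝ :=
    fun j k => (volume ((T^[n]) ⁻¹' dyadicSquare N j k ∩ R')).toReal with ha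
  have hane : ∀ j k : Fin (2^N), volume ((T^[n]) ⁻¹' dyadicSquare N j k ∩ R') ≠ ⊤ :=
    fun j k => ne_top_of_le_ne_top (volume_square_ne_top N j' k')
      (measure_mono Set.inter_subset_right)
  -- value of the integral
  have hIval : ∫ z in R', f (T^[n] z) = ∑ j, ∑ k, c j k * a j k := by
    have hcomp : (fun z => f (T^[n] z)) =
        fun z => ∑ j, ∑ k, Set.indicator ((T^[n]) ⁻¹' dyadicSquare N j k) (fun _ => c j k) z := by
      funext z
      rw [hf' (T^[n] z)]
      refine Finset.sum_congr rfl fun j _ => Finset.sum_congr rfl fun k _ => ?_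
      by_cases hz : T^[n] z ∈ dyadicSquare N j k
      · rw [Set.indicator_of_mem hz, Set.indicator_of_mem (Set.mem_preimage.2 hz)]
      · rw [Set.indicator_of_notMem hz,
          Set.indicator_of_notMem (fun hc => hz (Set.mem_preimage.1 hc))]
    rw [hcomp]
    have hIntR : ∀ j k : Fin (2^N),
        Integrable (Set.indicator ((T^[n]) ⁻¹' dyadicSquare N j k) (fun _ => c j k))
          (volume.restrict R') := by
      intro j k
      rw [integrable_indicator_iff (hSmeas j k)]
      refine integrableOn_const ?_
      rw [Measure.restrict_apply (hSmeas j k)]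
      exact (lt_of_le_of_ne le_top (hane j k)).ne
    rw [integral_finset_sum _ (fun j _ => integrable_finset_sum _ (fun k _ => hIntR j k))]
    refine Finset.sum_congr rfl fun j _ => ?_
    rw [integral_finset_sum _ (fun k _ => hIntR j k)]
    refine Finset.sum_congr rfl fun k _ => ?_
    rw [integral_indicator_const _ (hSmeas j k), measureReal_def, Measure.restrict_apply (hSmeas j k),
      smul_eq_mul, mul_comm]
  -- total mass
  have hsum_a : (∑ j, ∑ k, a j k) = v := by
    have hcoverR : (⋃ p : Fin (2^N) × Fin (2^N),
        ((T^[n]) ⁻¹' dyadicSquare N p.1 p.2 ∩ R')) = R' := by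
      ext z
      simp only [Set.mem_iUnion, Set.mem_inter_iff, Set.mem_preimage]
      constructor
      · rintro ⟨p, _, h⟩; exact h
      · intro hz
        obtain ⟨j, k, hjk⟩ := square_cover N (T^[n] z)
        exact ⟨(j, k), hjk, hz⟩
    have hdisj : Pairwise (Function.onFun Disjoint
        (fun p : Fin (2^N) × Fin (2^N) => (T^[n]) ⁻¹' dyadicSquare N p.1 p.2 ∩ R')) := by
      rintro p q hpq
      refine Disjoint.mono Set.inter_subset_left Set.inter_subset_left ?_
      refine Disjoint.preimage _ (square_disjoint N ?_)
      rintro ⟨h1, h2⟩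
      exact hpq (Prod.ext h1 h2)
    have hμ : volume R' = ∑' p : Fin (2^N) × Fin (2^N),
        volume ((T^[n]) ⁻¹' dyadicSquare N p.1 p.2 ∩ R') := by
      conv_lhs => rw [← hcoverR]
      exact measure_iUnion hdisj
        (fun p => (hSmeas p.1 p.2).inter (measurableSet_square N j' k'))
    rw [tsum_fintype] at hμ
    have := congrArg ENNReal.toReal hμ
    rw [htv j' k', ENNReal.toReal_sum (fun p _ => hane p.1 p.2)] at this
    rw [Fintype.sum_prod_type] at this
    exact this.symm
  -- lower bound for a
  have hage : ∀ j k : Fin (2^N), lam * v * v ≤ a j k := by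
    intro j k
    have := hmix j k j' k'
    rwa [htv j k, htv j' k'] at this
  -- sup norm bound
  set M : ℝ := ⨆ z : Torus, |f z| with hM
  have hbdd : BddAbove (Set.range fun z : Torus => |f z|) := by
    refine ⟨∑ j, ∑ k, |c j k|, ?_⟩
    rintro _ ⟨z, rfl⟩
    show |f z| ≤ _
    rw [hf' z]
    refine le_trans (Finset.abs_sum_le_sum_abs _ _) (Finset.sum_le_sum fun j _ => ?_)
    refine le_trans (Finset.abs_sum_le_sum_abs _ _) (Finset.sum_le_sum fun k _ => ?_)
    by_cases hz : z ∈ dyadicSquare N j k <;>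
      simp [Set.indicator_of_mem, Set.indicator_of_notMem, hz, abs_nonneg]
  have hcM : ∀ j k : Fin (2^N), |c j k| ≤ M := by
    intro j k
    have hfc : f ((((j:ℝ)/2^N : ℝ) : AddCircle (1:ℝ)), (((k:ℝ)/2^N : ℝ) : AddCircle (1:ℝ))) = c j k := by
      rw [hf' _]
      rw [Finset.sum_eq_single j]
      · rw [Finset.sum_eq_single k]
        · exact Set.indicator_of_mem (corner_mem N j k) _
        · intro k0 _ hk0
          refine Set.indicator_of_notMem (fun hmem => ?_) _
          exact Set.disjoint_left.1 (square_disjoint N (fun h => hk0 h.2))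
            hmem (corner_mem N j k)
        · intro h; exact absurd (Finset.mem_univ k) h
      · intro j0 _ hj0
        refine Finset.sum_eq_zero fun k0 _ => ?_
        refine Set.indicator_of_notMem (fun hmem => ?_) _
        exact Set.disjoint_left.1 (square_disjoint N (fun h => hj0 h.1))
          hmem (corner_mem N j k)
      · intro h; exact absurd (Finset.mem_univ j) h
    calc |c j k| = |f _| := by rw [hfc]
    _ ≤ M := le_ciSup hbdd _
  have hM0 : 0 ≤ M :=
    le_trans (abs_nonneg _) (le_ciSup hbdd ((0 : AddCircle (1:ℝ)), (0 : AddCircle (1:ℝ))))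
  -- main estimate
  set K : ℝ := lam * v * v with hK
  have hIe : (∑ j, ∑ k, c j k * a j k) = ∑ j, ∑ k, c j k * (a j k - K) := by
    have h1 : (∑ j, ∑ k, c j k * (a j k - K)) =
        (∑ j, ∑ k, c j k * a j k) - K * (∑ j, ∑ k, c j k) := by
      simp only [mul_sub, Finset.sum_sub_distrib, Finset.mul_sum]
      congr 1
      refine Finset.sum_congr rfl fun j _ => Finset.sum_congr rfl fun k _ => ?_
      ring
    rw [h1, hsum_c, mul_zero, sub_zero]
  have habs : |∑ j, ∑ k, c j k * (a j k - K)| ≤ M * ((1 - lam) * v) := by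
    have hstep : |∑ j, ∑ k, c j k * (a j k - K)| ≤ ∑ j, ∑ k, M * (a j k - K) := by
      refine le_trans (Finset.abs_sum_le_sum_abs _ _) (Finset.sum_le_sum fun j _ => ?_)
      refine le_trans (Finset.abs_sum_le_sum_abs _ _) (Finset.sum_le_sum fun k _ => ?_)
      rw [abs_mul, abs_of_nonneg (sub_nonneg.2 (hage j k))]
      exact mul_le_mul_of_nonneg_right (hcM j k) (sub_nonneg.2 (hage j k))
    refine le_trans hstep (le_of_eq ?_)
    have hcount : (∑ j : Fin (2^N), ∑ k : Fin (2^N), K) = (2^N : ℝ) * ((2^N : ℝ) * K) := by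
      simp [Finset.sum_const, Finset.card_univ, nsmul_eq_mul]
      try ring
    have h2K : (2^N : ℝ) * ((2^N : ℝ) * K) = lam * v := by
      rw [hK, hvdef, hs]
      field_simp
    have : (∑ j, ∑ k, M * (a j k - K)) = M * ((∑ j, ∑ k, a j k) - ∑ _j : Fin (2^N), ∑ _k : Fin (2^N), K) := by
      simp only [mul_sub, Finset.sum_sub_distrib, Finset.mul_sum]
    rw [this, hsum_a, hcount, h2K]
    ring
  rw [htv j' k', hIval, hIe, abs_mul, abs_of_nonneg (le_of_lt (inv_pos.2 hvpos))]
  calc v⁻¹ * |∑ j, ∑ k, c j k * (a j k - K)| ≤ v⁻¹ * (M * ((1 - lam) * v)) :=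
        mul_le_mul_of_nonneg_left habs (le_of_lt (inv_pos.2 hvpos))
  _ = (1 - lam) * M := by field_simp
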